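/- Fix an integer d ≥ 2, an index 0 ≤ i ≤ d, a threshold u ∈ ℝ, and κ as below with κ'(1) < 1. Then, as L → ∞, N_i(L,u) converges to (2√π / Γ((d+1)/2)) · (η_1(1−κ'(1)))^{−d/2} · (∫_{ℝ^d} Π(λ)·𝟙_{O_i}(λ)·f_{(1+η_1(1−κ'(1)))/2}(λ) dλ) · (1 − Φ(u)). (Low-disorder regime of Theorem 3.3, stated via the Kac–Rice expression for critical points of index i above level u.) -/

import Mathlib

open MeasureTheory Filter Real

/-- `K_d := 2^{d/2} ∏_{j=1}^d Γ(j/2)`. -/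
noncomputable def Kd (d : ℕ) : ℝ :=
  2 ^ ((d : ℝ) / 2) * ∏ j ∈ Finset.Icc 1 d, Real.Gamma ((j : ℝ) / 2)

/-- `Π(λ) := ∏_{j=1}^d |λ_j|`. -/
noncomputable def PiAbs (d : ℕ) (lam : Fin d → ℝ) : ℝ := ∏ j, |lam j|

/-- `Δ(λ) := ∏_{1 ≤ h < k ≤ d} |λ_h − λ_k|`. -/
noncomputable def DeltaV (d : ℕ) (lam : Fin d → ℝ) : ℝ :=
  ∏ h : Fin d, ∏ k : Fin d, if h < k then |lam h - lam k| else 1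

/-- The density of the ordered eigenvalues of a GOI(c) matrix. -/
noncomputable def fGOI (d : ℕ) (c : ℝ) (lam : Fin d → ℝ) : ℝ :=
  (Kd d * Real.sqrt (1 + d * c))⁻¹ * DeltaV d lam *
    Real.exp (-(∑ j, lam j ^ 2) / 2 + c * (∑ j, lam j) ^ 2 / (2 * (1 + d * c))) *
    Set.indicator {x : Fin d → ℝ | Monotone x} (fun _ => 1) lam

/-- `O_i := {λ : λ_i < 0 < λ_{i+1}}` with conventions `λ_0 = −∞`, `λ_{d+1} = +∞`
(one-based indexing; coordinates here are zero-based). -/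
def Oi (d i : ℕ) : Set (Fin d → ℝ) :=
  {lam | (∀ j : Fin d, (j : ℕ) + 1 = i → lam j < 0) ∧ (∀ j : Fin d, (j : ℕ) = i → 0 < lam j)}

/-- `∫_{ℝ^d} Π(λ)·𝟙_{O_i}(λ)·f_c(λ) dλ`. -/
noncomputable def GOIint (d i : ℕ) (c : ℝ) : ℝ :=
  ∫ lam : Fin d → ℝ,
    PiAbs d lam * Set.indicator (Oi d i) (fun _ => 1) lam * fGOI d c lam

/-- `η_L := κ_L'(1)/κ_L''(1)` where `κ_L` is the `L`-fold iterate of `κ`. -/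
noncomputable def etaL (κ : ℝ → ℝ) (L : ℕ) : ℝ :=
  deriv (κ^[L]) 1 / deriv (deriv (κ^[L])) 1

/-- The Kac–Rice expression for the expected number of critical points of index `i`
of the depth-`L` limiting field on `S^d`. -/
noncomputable def Mcrit (d i : ℕ) (κ : ℝ → ℝ) (L : ℕ) : ℝ :=
  2 * Real.sqrt π / Real.Gamma (((d : ℝ) + 1) / 2) * etaL κ L ^ (-(d : ℝ) / 2) *
    GOIint d i ((1 + etaL κ L) / 2)

/-- `ξ_L := κ_L'(1)²/κ_L''(1)`. -/
noncomputable def xiL (κ : ℝ → ℝ) (L : ℕ) : ℝ :=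
  deriv (κ^[L]) 1 ^ 2 / deriv (deriv (κ^[L])) 1

/-- The standard Gaussian density. -/
noncomputable def stdPhi (x : ℝ) : ℝ := Real.exp (-x ^ 2 / 2) / Real.sqrt (2 * π)

/-- The standard Gaussian cumulative distribution function. -/
noncomputable def stdCDF (u : ℝ) : ℝ := ∫ x in Set.Iic u, stdPhi x

/-- `∫_u^∞ φ(x)·(∫_{ℝ^d} Π(λ_{ξ,x})·𝟙_{O_i}(λ_{ξ,x})·f_c(λ) dλ) dx`, where
`λ_{ξ,x}` has components `λ_j − ξ·x/√2`. -/
noncomputable def GOIintShift (d i : ℕ) (c ξ u : ℝ) : ℝ :=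
  ∫ x in Set.Ioi u, stdPhi x *
    ∫ lam : Fin d → ℝ,
      PiAbs d (fun j => lam j - ξ * x / Real.sqrt 2) *
        Set.indicator (Oi d i) (fun _ => 1) (fun j => lam j - ξ * x / Real.sqrt 2) *
        fGOI d c lam

/-- The Kac–Rice expression for the expected number of critical points of index `i`
above level `u` of the depth-`L` limiting field on `S^d`. -/
noncomputable def Ncrit (d i : ℕ) (κ : ℝ → ℝ) (u : ℝ) (L : ℕ) : ℝ :=
  2 * Real.sqrt π / Real.Gamma (((d : ℝ) + 1) / 2) * etaL κ L ^ (-(d : ℝ) / 2) *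
    GOIintShift d i ((1 + etaL κ L - xiL κ L) / 2) (xiL κ L) u

section IterDeriv
variable {κ : ℝ → ℝ}

lemma iter_fix (hfix : κ 1 = 1) (L : ℕ) : κ^[L] 1 = 1 := Function.iterate_fixed hfix L

lemma contDiff_iter (hsmooth : ContDiff ℝ 2 κ) (L : ℕ) : ContDiff ℝ 2 (κ^[L]) := by
  induction L with
  | zero => simpa using contDiff_id
  | succ M ih => rw [Function.iterate_succ']; exact hsmooth.comp ih

lemma diff_k (hsmooth : ContDiff ℝ 2 κ) : Differentiable ℝ κ :=
  hsmooth.differentiable (by norm_num)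

lemma diff_dk (hsmooth : ContDiff ℝ 2 κ) : Differentiable ℝ (deriv κ) := by
  have h2 : ContDiff ℝ (1 + 1) κ := by
    exact (by norm_num : ((1 : WithTop ℕ∞) + 1) = 2) ▸ hsmooth
  exact (contDiff_succ_iff_deriv.mp h2).2.2.differentiable one_ne_zero

lemma diff_iter (hsmooth : ContDiff ℝ 2 κ) (L : ℕ) : Differentiable ℝ (κ^[L]) :=
  (contDiff_iter hsmooth L).differentiable (by norm_num)

lemma diff_diter (hsmooth : ContDiff ℝ 2 κ) (L : ℕ) : Differentiable ℝ (deriv (κ^[L])) := by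
  have h2 : ContDiff ℝ (1 + 1) (κ^[L]) := by
    exact (by norm_num : ((1 : WithTop ℕ∞) + 1) = 2) ▸ contDiff_iter hsmooth L
  exact (contDiff_succ_iff_deriv.mp h2).2.2.differentiable one_ne_zero

lemma deriv_iter_one (hsmooth : ContDiff ℝ 2 κ) (hfix : κ 1 = 1) (L : ℕ) :
    deriv (κ^[L]) 1 = (deriv κ 1) ^ L := by
  induction L with
  | zero => simp
  | succ M ih =>
    rw [Function.iterate_succ']
    rw [deriv_comp _ ((diff_k hsmooth).differentiableAt) ((diff_iter hsmooth M).differentiableAt)]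
    rw [iter_fix hfix, ih]; ring

lemma deriv_iter_fun (hsmooth : ContDiff ℝ 2 κ) (L : ℕ) :
    deriv (κ^[L + 1]) = fun x => deriv κ (κ^[L] x) * deriv (κ^[L]) x := by
  funext x
  rw [Function.iterate_succ']
  exact deriv_comp x ((diff_k hsmooth).differentiableAt) ((diff_iter hsmooth L).differentiableAt)

lemma deriv2_iter_one (hsmooth : ContDiff ℝ 2 κ) (hfix : κ 1 = 1) (L : ℕ) :
    deriv (deriv (κ^[L])) 1 =
      deriv (deriv κ) 1 * ∑ k ∈ Finset.range L, (deriv κ 1) ^ (L - 1 + k) := by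
  induction L with
  | zero => simp [Function.iterate_zero, deriv_id'']
  | succ M ih =>
    rw [deriv_iter_fun hsmooth M]
    have hu : DifferentiableAt ℝ (fun x => deriv κ (κ^[M] x)) 1 :=
      ((diff_dk hsmooth) (κ^[M] 1)).comp 1 ((diff_iter hsmooth M).differentiableAt)
    have hv : DifferentiableAt ℝ (deriv (κ^[M])) 1 := (diff_diter hsmooth M).differentiableAt
    rw [deriv_fun_mul hu hv]
    have hcomp : deriv (fun x => deriv κ (κ^[M] x)) 1
        = deriv (deriv κ) (κ^[M] 1) * deriv (κ^[M]) 1 :=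
      deriv_comp 1 ((diff_dk hsmooth).differentiableAt) ((diff_iter hsmooth M).differentiableAt)
    rw [hcomp, iter_fix hfix, deriv_iter_one hsmooth hfix, ih]
    rcases Nat.eq_zero_or_pos M with hM | hM
    · subst hM; simp
    · have e1 : ∑ k ∈ Finset.range M, deriv κ 1 ^ (M + 1 - 1 + k)
          = ∑ k ∈ Finset.range M, deriv κ 1 * deriv κ 1 ^ (M - 1 + k) :=
        Finset.sum_congr rfl (fun k _ => by
          rw [show M + 1 - 1 + k = (M - 1 + k) + 1 by omega, pow_succ]; ring)
      have h1 : ∑ k ∈ Finset.range (M + 1), deriv κ 1 ^ (M + 1 - 1 + k)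
          = deriv κ 1 ^ (M + M)
            + deriv κ 1 * ∑ k ∈ Finset.range M, deriv κ 1 ^ (M - 1 + k) := by
        rw [Finset.sum_range_succ, e1, Finset.mul_sum,
          show M + 1 - 1 + M = M + M by omega]
        ring
      rw [h1, pow_add]; ring

lemma etaL_succ_eq (hsmooth : ContDiff ℝ 2 κ) (hfix : κ 1 = 1)
    (hp0 : deriv κ 1 ≠ 0) (M : ℕ) :
    etaL κ (M + 1) = deriv κ 1 /
      (deriv (deriv κ) 1 * ∑ k ∈ Finset.range (M + 1), deriv κ 1 ^ k) := by
  unfold etaL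
  rw [deriv_iter_one hsmooth hfix, deriv2_iter_one hsmooth hfix]
  have e1 : ∑ k ∈ Finset.range (M + 1), deriv κ 1 ^ (M + 1 - 1 + k)
      = deriv κ 1 ^ M * ∑ k ∈ Finset.range (M + 1), deriv κ 1 ^ k := by
    rw [Finset.mul_sum]
    exact Finset.sum_congr rfl fun k _ => by
      rw [← pow_add, show M + 1 - 1 + k = M + k by omega]
  rw [e1, pow_succ,
    show deriv (deriv κ) 1 * (deriv κ 1 ^ M * ∑ k ∈ Finset.range (M + 1), deriv κ 1 ^ k)
      = deriv κ 1 ^ M * (deriv (deriv κ) 1 * ∑ k ∈ Finset.range (M + 1), deriv κ 1 ^ k)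
      by ring,
    mul_div_mul_left _ _ (pow_ne_zero M hp0)]

lemma xiL_eq (hsmooth : ContDiff ℝ 2 κ) (hfix : κ 1 = 1) (L : ℕ) :
    xiL κ L = deriv κ 1 ^ L * etaL κ L := by
  unfold xiL etaL
  rw [deriv_iter_one hsmooth hfix, sq, mul_div_assoc]

lemma etaL_tendsto (hsmooth : ContDiff ℝ 2 κ) (hfix : κ 1 = 1)
    (hp0 : 0 < deriv κ 1) (hp1 : deriv κ 1 < 1) (hq : 0 < deriv (deriv κ) 1) :
    Tendsto (etaL κ) atTop
      (nhds (deriv κ 1 / deriv (deriv κ) 1 * (1 - deriv κ 1))) := by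
  set p := deriv κ 1
  set q := deriv (deriv κ) 1
  have hS : Tendsto (fun n => ∑ k ∈ Finset.range n, p ^ k) atTop (nhds (1 - p)⁻¹) :=
    (hasSum_geometric_of_lt_one hp0.le hp1).tendsto_sum_nat
  have hne : q * (1 - p)⁻¹ ≠ 0 := by
    have : (0:ℝ) < (1 - p)⁻¹ := inv_pos.mpr (by linarith)
    positivity
  have hg : Tendsto (fun L => p / (q * ∑ k ∈ Finset.range L, p ^ k)) atTop
      (nhds (p / (q * (1 - p)⁻¹))) :=
    tendsto_const_nhds.div (tendsto_const_nhds.mul hS) hne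
  have heq : (fun L => p / (q * ∑ k ∈ Finset.range L, p ^ k)) =ᶠ[atTop] etaL κ := by
    filter_upwards [eventually_ge_atTop 1] with L hL
    obtain ⟨M, rfl⟩ := Nat.exists_eq_add_of_le hL
    rw [show 1 + M = M + 1 by omega, etaL_succ_eq hsmooth hfix hp0.ne']
  have hval : p / (q * (1 - p)⁻¹) = p / q * (1 - p) := by
    rw [div_mul_eq_div_div, div_inv_eq_mul]
  rw [← hval]
  exact hg.congr' heq

lemma xiL_tendsto (hsmooth : ContDiff ℝ 2 κ) (hfix : κ 1 = 1)
    (hp0 : 0 < deriv κ 1) (hp1 : deriv κ 1 < 1) (hq : 0 < deriv (deriv κ) 1) :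
    Tendsto (xiL κ) atTop (nhds 0) := by
  have h0 : Tendsto (fun L => deriv κ 1 ^ L) atTop (nhds 0) :=
    tendsto_pow_atTop_nhds_zero_of_lt_one hp0.le hp1
  have := h0.mul (etaL_tendsto hsmooth hfix hp0 hp1 hq)
  rw [zero_mul] at this
  exact this.congr fun L => (xiL_eq hsmooth hfix L).symm

end IterDeriv

/-! ### Basic lemmas -/

lemma Kd_pos (d : ℕ) : 0 < Kd d := by
  unfold Kd
  refine mul_pos (rpow_pos_of_pos two_pos _) (Finset.prod_pos fun j hj => ?_)
  have h1 : (1 : ℝ) ≤ (j : ℝ) := Nat.one_le_cast.mpr (Finset.mem_Icc.mp hj).1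
  exact Real.Gamma_pos_of_pos (by linarith)

lemma abs_le_one_add_sq (t : ℝ) : |t| ≤ 1 + t ^ 2 := by
  nlinarith [sq_nonneg (|t| - 1), sq_abs t, abs_nonneg t]

lemma contPiAbs (d : ℕ) : Continuous (PiAbs d) :=
  continuous_finset_prod _ fun j _ => (continuous_apply j).abs

lemma contDeltaV (d : ℕ) : Continuous (DeltaV d) := by
  refine continuous_finset_prod _ fun h _ => continuous_finset_prod _ fun k _ => ?_
  by_cases hhk : h < k
  · simp only [if_pos hhk]; exact ((continuous_apply h).sub (continuous_apply k)).abs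
  · simp only [if_neg hhk]; exact continuous_const

lemma measSet_mono (d : ℕ) : MeasurableSet {x : Fin d → ℝ | Monotone x} := by
  have h : {x : Fin d → ℝ | Monotone x}
      = ⋂ p : Fin d × Fin d, ⋂ _ : p.1 ≤ p.2, {x | x p.1 ≤ x p.2} := by
    ext x
    simp only [Set.mem_setOf_eq, Set.mem_iInter]
    exact ⟨fun hx p hp => hx hp, fun hx a b hab => hx (a, b) hab⟩
  rw [h]
  exact MeasurableSet.iInter fun p => MeasurableSet.iInter fun _ =>
    measurableSet_le (measurable_pi_apply _) (measurable_pi_apply _)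

lemma cont_exp_part (d : ℕ) (c : ℝ) :
    Continuous fun lam : Fin d → ℝ =>
      Real.exp (-(∑ j, lam j ^ 2) / 2 + c * (∑ j, lam j) ^ 2 / (2 * (1 + d * c))) := by
  fun_prop

lemma meas_fGOI (d : ℕ) (c : ℝ) : Measurable (fGOI d c) := by
  unfold fGOI
  exact (((measurable_const.mul (contDeltaV d).measurable).mul
    (cont_exp_part d c).measurable).mul
    (Measurable.indicator measurable_const (measSet_mono d)))

lemma isOpen_Oi (d i : ℕ) : IsOpen (Oi d i) := by
  have h : Oi d i
      = (⋂ j : Fin d, ⋂ _ : (j : ℕ) + 1 = i, {lam : Fin d → ℝ | lam j < 0})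
        ∩ (⋂ j : Fin d, ⋂ _ : (j : ℕ) = i, {lam : Fin d → ℝ | 0 < lam j}) := by
    ext lam
    simp only [Oi, Set.mem_setOf_eq, Set.mem_inter_iff, Set.mem_iInter]
  rw [h]
  exact ((isOpen_iInter_of_finite fun j => isOpen_iInter_of_finite fun _ =>
      isOpen_lt (continuous_apply j) continuous_const).inter
    (isOpen_iInter_of_finite fun j => isOpen_iInter_of_finite fun _ =>
      isOpen_lt continuous_const (continuous_apply j)))

/-! ### Bounds -/

lemma DeltaV_nonneg (d : ℕ) (lam : Fin d → ℝ) : 0 ≤ DeltaV d lam :=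
  Finset.prod_nonneg fun h _ => Finset.prod_nonneg fun k _ => by
    by_cases hhk : h < k
    · simp [hhk, abs_nonneg]
    · simp [hhk]

lemma DeltaV_le (d : ℕ) (lam : Fin d → ℝ) :
    DeltaV d lam ≤ (∏ j, (1 + lam j ^ 2)) ^ (2 * d) := by
  have h1 : DeltaV d lam ≤ ∏ h : Fin d, ∏ k : Fin d, (1 + lam h ^ 2) * (1 + lam k ^ 2) := by
    refine Finset.prod_le_prod (fun h _ => Finset.prod_nonneg fun k _ => ?_)
      (fun h _ => Finset.prod_le_prod (fun k _ => ?_) (fun k _ => ?_))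
    · by_cases hhk : h < k
      · simp [hhk, abs_nonneg]
      · simp [hhk]
    · by_cases hhk : h < k
      · simp [hhk, abs_nonneg]
      · simp [hhk]
    · by_cases hhk : h < k
      · simp only [if_pos hhk]
        calc |lam h - lam k| ≤ |lam h| + |lam k| := abs_sub _ _
          _ ≤ (1 + lam h ^ 2) * (1 + lam k ^ 2) := by
              nlinarith [sq_nonneg (|lam h| - 1), sq_nonneg (|lam k| - 1), sq_abs (lam h),
                sq_abs (lam k), sq_nonneg (lam h * lam k), abs_nonneg (lam h), abs_nonneg (lam k)]
      · simp only [if_neg hhk]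
        nlinarith [sq_nonneg (lam h), sq_nonneg (lam k), sq_nonneg (lam h * lam k)]
  refine h1.trans (le_of_eq ?_)
  simp only [Finset.prod_mul_distrib, Finset.prod_const, Finset.card_univ, Fintype.card_fin,
    Finset.prod_pow]
  rw [two_mul, pow_add]

lemma exponent_le {d : ℕ} {c cmax : ℝ} (hc0 : 0 ≤ c) (hcm : c ≤ cmax) (lam : Fin d → ℝ) :
    -(∑ j, lam j ^ 2) / 2 + c * (∑ j, lam j) ^ 2 / (2 * (1 + d * c))
      ≤ -(1 / (2 * (1 + d * cmax))) * ∑ j, lam j ^ 2 := by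
  set T := ∑ j, lam j ^ 2 with hT
  have hTnn : 0 ≤ T := Finset.sum_nonneg fun j _ => sq_nonneg _
  have hdc : (0 : ℝ) < 1 + d * c := by
    have := mul_nonneg (Nat.cast_nonneg d : (0:ℝ) ≤ d) hc0; linarith
  have hdcm : (0 : ℝ) < 1 + d * cmax := by
    have := mul_nonneg (Nat.cast_nonneg d : (0:ℝ) ≤ d) (hc0.trans hcm); linarith
  have hS : (∑ j, lam j) ^ 2 ≤ d * T := by
    have := sq_sum_le_card_mul_sum_sq (s := (Finset.univ : Finset (Fin d))) (f := lam)
    simpa [hT] using this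
  have h2 : c * (∑ j, lam j) ^ 2 ≤ c * (d * T) := mul_le_mul_of_nonneg_left hS hc0
  have h3 : c * (∑ j, lam j) ^ 2 / (2 * (1 + d * c)) ≤ c * (d * T) / (2 * (1 + d * c)) :=
    div_le_div_of_nonneg_right h2 (by linarith) |>.trans_eq rfl
  have h4 : -T / 2 + c * (d * T) / (2 * (1 + d * c)) = -(1 / (2 * (1 + d * c))) * T := by
    field_simp
    ring
  have h5 : -(1 / (2 * (1 + d * c))) * T ≤ -(1 / (2 * (1 + d * cmax))) * T := by
    apply mul_le_mul_of_nonneg_right _ hTnn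
    have : 1 / (2 * (1 + d * cmax)) ≤ 1 / (2 * (1 + d * c)) := by
      apply one_div_le_one_div_of_le (by positivity)
      have : (d : ℝ) * c ≤ d * cmax := mul_le_mul_of_nonneg_left hcm (Nat.cast_nonneg d)
      linarith
    linarith
  calc -T / 2 + c * (∑ j, lam j) ^ 2 / (2 * (1 + d * c))
      ≤ -T / 2 + c * (d * T) / (2 * (1 + d * c)) := by linarith
    _ = -(1 / (2 * (1 + d * c))) * T := h4
    _ ≤ -(1 / (2 * (1 + d * cmax))) * T := h5

lemma indicator_abs_le {α : Type*} (s : Set α) (a : α) :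
    |Set.indicator s (fun _ => (1:ℝ)) a| ≤ 1 := by
  by_cases h : a ∈ s <;> simp [Set.indicator_apply, h]

lemma indicator_nonneg' {α : Type*} (s : Set α) (a : α) :
    0 ≤ Set.indicator s (fun _ => (1:ℝ)) a := by
  by_cases h : a ∈ s <;> simp [Set.indicator_apply, h]

lemma fGOI_bound (d : ℕ) {c cmax : ℝ} (hc0 : 0 ≤ c) (hcm : c ≤ cmax) (lam : Fin d → ℝ) :
    |fGOI d c lam| ≤ (Kd d)⁻¹ * ((∏ j, (1 + lam j ^ 2)) ^ (2 * d)
      * Real.exp (-(1 / (2 * (1 + d * cmax))) * ∑ j, lam j ^ 2)) := by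
  have hdc : (0 : ℝ) < 1 + d * c := by
    have := mul_nonneg (Nat.cast_nonneg d : (0:ℝ) ≤ d) hc0; linarith
  have hsq : 1 ≤ Real.sqrt (1 + d * c) := by
    have h1 : (0:ℝ) ≤ d * c := mul_nonneg (Nat.cast_nonneg d) hc0
    have := Real.sqrt_le_sqrt (show (1:ℝ) ≤ 1 + d * c by linarith)
    simpa using this
  have hKnn : (0:ℝ) ≤ (Kd d)⁻¹ := inv_nonneg.mpr (Kd_pos d).le
  have hPnn : (0:ℝ) ≤ ∏ j, (1 + lam j ^ 2) :=
    Finset.prod_nonneg fun j _ => by positivity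
  have hpre : |(Kd d * Real.sqrt (1 + d * c))⁻¹| ≤ (Kd d)⁻¹ := by
    rw [abs_of_nonneg (inv_nonneg.mpr (mul_nonneg (Kd_pos d).le (Real.sqrt_nonneg _)))]
    rw [mul_inv]
    calc (Kd d)⁻¹ * (Real.sqrt (1 + d * c))⁻¹ ≤ (Kd d)⁻¹ * 1 := by
          apply mul_le_mul_of_nonneg_left _ (le_of_lt (inv_pos.mpr (Kd_pos d)))
          exact inv_le_one_of_one_le₀ hsq
      _ = (Kd d)⁻¹ := mul_one _
  have hP : (0:ℝ) ≤ (∏ j, (1 + lam j ^ 2)) ^ (2 * d) := pow_nonneg hPnn _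
  unfold fGOI
  rw [abs_mul, abs_mul, abs_mul]
  calc |(Kd d * Real.sqrt (1 + d * c))⁻¹| * |DeltaV d lam|
        * |Real.exp (-(∑ j, lam j ^ 2) / 2 + c * (∑ j, lam j) ^ 2 / (2 * (1 + d * c)))|
        * |Set.indicator {x : Fin d → ℝ | Monotone x} (fun _ => 1) lam|
      ≤ (Kd d)⁻¹ * ((∏ j, (1 + lam j ^ 2)) ^ (2 * d))
        * Real.exp (-(1 / (2 * (1 + d * cmax))) * ∑ j, lam j ^ 2) * 1 := by
        refine mul_le_mul (mul_le_mul (mul_le_mul hpre ?_ (abs_nonneg _) hKnn) ?_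
          (abs_nonneg _) (mul_nonneg hKnn hP)) (indicator_abs_le _ _) (abs_nonneg _)
          (mul_nonneg (mul_nonneg hKnn hP) (Real.exp_pos _).le)
        · rw [abs_of_nonneg (DeltaV_nonneg d lam)]; exact DeltaV_le d lam
        · rw [abs_of_nonneg (Real.exp_pos _).le]
          exact Real.exp_le_exp.mpr (exponent_le hc0 hcm lam)
    _ = (Kd d)⁻¹ * ((∏ j, (1 + lam j ^ 2)) ^ (2 * d)
        * Real.exp (-(1 / (2 * (1 + d * cmax))) * ∑ j, lam j ^ 2)) := by ring

lemma PiAbs_shift_le (d : ℕ) {s R : ℝ} (hR : |s| ≤ R) (lam : Fin d → ℝ) :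
    PiAbs d (fun j => lam j - s) ≤ (1 + R) ^ d * ∏ j, (1 + lam j ^ 2) := by
  have hR0 : 0 ≤ R := (abs_nonneg s).trans hR
  have h : ∀ j, |lam j - s| ≤ (1 + R) * (1 + lam j ^ 2) := fun j => by
    have h1 : |lam j - s| ≤ |lam j| + |s| := abs_sub _ _
    have h2 : |lam j| ≤ 1 + lam j ^ 2 := abs_le_one_add_sq _
    have h3 : |s| ≤ R * (1 + lam j ^ 2) := by
      calc |s| ≤ R := hR
        _ ≤ R * (1 + lam j ^ 2) := by nlinarith [sq_nonneg (lam j)]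
    nlinarith [sq_nonneg (lam j)]
  calc PiAbs d (fun j => lam j - s) ≤ ∏ j, ((1 + R) * (1 + lam j ^ 2)) :=
        Finset.prod_le_prod (fun j _ => abs_nonneg _) (fun j _ => h j)
    _ = (1 + R) ^ d * ∏ j, (1 + lam j ^ 2) := by
        rw [Finset.prod_mul_distrib, Finset.prod_const, Finset.card_univ, Fintype.card_fin]

/-- Full bound on the shifted integrand. -/
lemma integrand_bound (d i : ℕ) {c cmax s R : ℝ} (hc0 : 0 ≤ c) (hcm : c ≤ cmax)
    (hR : |s| ≤ R) (lam : Fin d → ℝ) :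
    |PiAbs d (fun j => lam j - s) * Set.indicator (Oi d i) (fun _ => 1) (fun j => lam j - s)
        * fGOI d c lam|
      ≤ (Kd d)⁻¹ * (1 + R) ^ d
        * ∏ j, ((1 + lam j ^ 2) ^ (2 * d + 1)
            * Real.exp (-(1 / (2 * (1 + d * cmax))) * lam j ^ 2)) := by
  have hR0 : 0 ≤ R := (abs_nonneg s).trans hR
  rw [abs_mul, abs_mul]
  have h1 : |PiAbs d (fun j => lam j - s)| ≤ (1 + R) ^ d * ∏ j, (1 + lam j ^ 2) := by
    rw [abs_of_nonneg (Finset.prod_nonneg fun j _ => abs_nonneg _)]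
    exact PiAbs_shift_le d hR lam
  have h3 := fGOI_bound d hc0 hcm lam
  calc |PiAbs d (fun j => lam j - s)| * |Set.indicator (Oi d i) (fun _ => 1) (fun j => lam j - s)|
        * |fGOI d c lam|
      ≤ ((1 + R) ^ d * ∏ j, (1 + lam j ^ 2)) * 1
        * ((Kd d)⁻¹ * ((∏ j, (1 + lam j ^ 2)) ^ (2 * d)
            * Real.exp (-(1 / (2 * (1 + d * cmax))) * ∑ j, lam j ^ 2))) := by
        have hPnn : (0:ℝ) ≤ ∏ j, (1 + lam j ^ 2) :=
          Finset.prod_nonneg fun j _ => by positivity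
        have hbase : (0:ℝ) ≤ (1 + R) ^ d * ∏ j, (1 + lam j ^ 2) :=
          mul_nonneg (pow_nonneg (by linarith) d) hPnn
        refine mul_le_mul (mul_le_mul h1 (indicator_abs_le _ _) (abs_nonneg _) hbase) h3
          (abs_nonneg _) (by rw [mul_one]; exact hbase)
    _ = (Kd d)⁻¹ * (1 + R) ^ d
        * ((∏ j, (1 + lam j ^ 2)) ^ (2 * d + 1)
            * Real.exp (-(1 / (2 * (1 + d * cmax))) * ∑ j, lam j ^ 2)) := by
        rw [pow_succ]
        ring
    _ = (Kd d)⁻¹ * (1 + R) ^ d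
        * ∏ j, ((1 + lam j ^ 2) ^ (2 * d + 1)
            * Real.exp (-(1 / (2 * (1 + d * cmax))) * lam j ^ 2)) := by
        rw [Finset.prod_mul_distrib, Finset.prod_pow]
        congr 1
        rw [Finset.mul_sum, Real.exp_sum]

/-! ### Integrability -/

lemma pow_le_exp_factorial {t : ℝ} (ht : 0 ≤ t) (m : ℕ) :
    t ^ m ≤ m.factorial * Real.exp t := by
  have h1 : t ^ m / m.factorial ≤ Real.exp t := by
    have h2 := Real.sum_le_exp_of_nonneg ht (m + 1)
    refine le_trans ?_ h2
    refine Finset.single_le_sum (f := fun i => t ^ i / i.factorial) (fun i _ => ?_)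
      (Finset.self_mem_range_succ m)
    positivity
  have hf : (0:ℝ) < m.factorial := by exact_mod_cast Nat.factorial_pos m
  calc t ^ m = m.factorial * (t ^ m / m.factorial) := by field_simp
    _ ≤ m.factorial * Real.exp t := mul_le_mul_of_nonneg_left h1 hf.le

lemma int1d {b : ℝ} (hb : 0 < b) (m : ℕ) :
    Integrable fun x : ℝ => (1 + x ^ 2) ^ m * Real.exp (-b * x ^ 2) := by
  set C : ℝ := m.factorial * Real.exp (b / 2) * (2 / b) ^ m with hC
  have hkey : ∀ x : ℝ, (1 + x ^ 2) ^ m * Real.exp (-b * x ^ 2)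
      ≤ C * Real.exp (-(b / 2) * x ^ 2) := by
    intro x
    have hx2 : (0:ℝ) ≤ x ^ 2 := sq_nonneg x
    have ht : (0:ℝ) ≤ b / 2 * (1 + x ^ 2) := by positivity
    have h1 := pow_le_exp_factorial ht m
    have h2 : (1 + x ^ 2) ^ m ≤ C * Real.exp (b / 2 * x ^ 2) := by
      have h3 : Real.exp (b / 2 * (1 + x ^ 2)) = Real.exp (b / 2) * Real.exp (b / 2 * x ^ 2) := by
        rw [← Real.exp_add]; ring_nf
      rw [mul_pow, h3] at h1
      calc (1 + x ^ 2) ^ m = (2 / b) ^ m * ((b / 2) ^ m * (1 + x ^ 2) ^ m) := by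
            rw [← mul_assoc, ← mul_pow, show (2 / b) * (b / 2) = 1 by field_simp, one_pow,
              one_mul]
        _ ≤ (2 / b) ^ m * (m.factorial * (Real.exp (b / 2) * Real.exp (b / 2 * x ^ 2))) :=
            mul_le_mul_of_nonneg_left h1 (by positivity)
        _ = C * Real.exp (b / 2 * x ^ 2) := by rw [hC]; ring
    calc (1 + x ^ 2) ^ m * Real.exp (-b * x ^ 2)
        ≤ (C * Real.exp (b / 2 * x ^ 2)) * Real.exp (-b * x ^ 2) :=
          mul_le_mul_of_nonneg_right h2 (Real.exp_pos _).le
      _ = C * Real.exp (-(b / 2) * x ^ 2) := by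
          rw [mul_assoc, ← Real.exp_add]; congr 2; ring
  refine Integrable.mono' ((integrable_exp_neg_mul_sq (half_pos hb)).const_mul C)
    (Continuous.aestronglyMeasurable (by fun_prop)) ?_
  filter_upwards with x
  rw [Real.norm_eq_abs, abs_of_nonneg (by positivity)]
  exact hkey x

lemma intdom (d : ℕ) {b : ℝ} (hb : 0 < b) (m : ℕ) :
    Integrable fun lam : Fin d → ℝ =>
      ∏ j, ((1 + lam j ^ 2) ^ m * Real.exp (-b * lam j ^ 2)) :=
  Integrable.fin_nat_prod fun _ => int1d hb m

/-! ### Sign stability and indicator convergence -/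

lemma shift_mem_Oi_iff (d i : ℕ) {lam : Fin d → ℝ} {s : ℝ} (h : ∀ j, |s| < |lam j|) :
    ((fun j => lam j - s) ∈ Oi d i) ↔ lam ∈ Oi d i := by
  have key : ∀ j, (lam j - s < 0 ↔ lam j < 0) ∧ (0 < lam j - s ↔ 0 < lam j) := by
    intro j
    obtain ⟨hj1, hj2⟩ := abs_lt.mp (h j)
    rcases lt_trichotomy (lam j) 0 with hl | hl | hl
    · rw [abs_of_neg hl] at hj1 hj2
      constructor <;> constructor <;> intro h' <;> linarith
    · exact absurd (h j) (by rw [hl, abs_zero]; exact (abs_nonneg s).not_gt)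
    · rw [abs_of_pos hl] at hj1 hj2
      constructor <;> constructor <;> intro h' <;> linarith
  simp only [Oi, Set.mem_setOf_eq]
  constructor
  · rintro ⟨A, B⟩
    exact ⟨fun j hj => ((key j).1).mp (A j hj), fun j hj => ((key j).2).mp (B j hj)⟩
  · rintro ⟨A, B⟩
    exact ⟨fun j hj => ((key j).1).mpr (A j hj), fun j hj => ((key j).2).mpr (B j hj)⟩

lemma indicator_shift_eq (d i : ℕ) {lam : Fin d → ℝ} {s : ℝ} (h : ∀ j, |s| < |lam j|) :
    Set.indicator (Oi d i) (fun _ => (1:ℝ)) (fun j => lam j - s)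
      = Set.indicator (Oi d i) (fun _ => (1:ℝ)) lam := by
  by_cases hm : lam ∈ Oi d i
  · rw [Set.indicator_of_mem hm, Set.indicator_of_mem ((shift_mem_Oi_iff d i h).mpr hm)]
  · rw [Set.indicator_of_notMem hm,
      Set.indicator_of_notMem (fun hcon => hm ((shift_mem_Oi_iff d i h).mp hcon))]

/-! ### Measurability of the integrands -/

lemma sm_inner (d i : ℕ) (c t : ℝ) :
    AEStronglyMeasurable (fun lam : Fin d → ℝ =>
      PiAbs d (fun j => lam j - t) * Set.indicator (Oi d i) (fun _ => 1) (fun j => lam j - t)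
        * fGOI d c lam) volume := by
  have hshift : Measurable fun lam : Fin d → ℝ => (fun j => lam j - t) :=
    measurable_pi_lambda _ fun j => (measurable_pi_apply j).sub measurable_const
  have h1 : Measurable fun lam : Fin d → ℝ => PiAbs d (fun j => lam j - t) :=
    (contPiAbs d).measurable.comp hshift
  have h2 : Measurable fun lam : Fin d → ℝ =>
      Set.indicator (Oi d i) (fun _ => (1:ℝ)) (fun j => lam j - t) := by
    have he : (fun lam : Fin d → ℝ => Set.indicator (Oi d i) (fun _ => (1:ℝ))
          (fun j => lam j - t))
        = Set.indicator ((fun lam : Fin d → ℝ => fun j => lam j - t) ⁻¹' Oi d i)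
            (fun _ => 1) := by
      funext lam
      exact (Set.indicator_comp_right
        (g := fun _ : Fin d → ℝ => (1:ℝ)) (fun lam : Fin d → ℝ => fun j => lam j - t)).symm
    rw [he]
    exact measurable_const.indicator (hshift (isOpen_Oi d i).measurableSet)
  exact ((h1.mul h2).mul (meas_fGOI d c)).aestronglyMeasurable

lemma cont_stdPhi : Continuous stdPhi := by
  unfold stdPhi; fun_prop

lemma sm_outer (d i : ℕ) (c ξ u : ℝ) :
    AEStronglyMeasurable (fun x : ℝ => stdPhi x *
      ∫ lam : Fin d → ℝ,
        PiAbs d (fun j => lam j - ξ * x / Real.sqrt 2) *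
          Set.indicator (Oi d i) (fun _ => 1) (fun j => lam j - ξ * x / Real.sqrt 2) *
          fGOI d c lam) (volume.restrict (Set.Ioi u)) := by
  have hshift : Measurable fun p : ℝ × (Fin d → ℝ) => (fun j => p.2 j - ξ * p.1 / Real.sqrt 2) :=
    measurable_pi_lambda _ fun j =>
      ((measurable_pi_apply j).comp measurable_snd).sub
        ((measurable_fst.const_mul ξ).div_const _)
  have h1 : Measurable fun p : ℝ × (Fin d → ℝ) =>
      PiAbs d (fun j => p.2 j - ξ * p.1 / Real.sqrt 2) :=
    (contPiAbs d).measurable.comp hshift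
  have h2 : Measurable fun p : ℝ × (Fin d → ℝ) =>
      Set.indicator (Oi d i) (fun _ => (1:ℝ)) (fun j => p.2 j - ξ * p.1 / Real.sqrt 2) := by
    have he : (fun p : ℝ × (Fin d → ℝ) => Set.indicator (Oi d i) (fun _ => (1:ℝ))
          (fun j => p.2 j - ξ * p.1 / Real.sqrt 2))
        = Set.indicator ((fun p : ℝ × (Fin d → ℝ) => fun j => p.2 j - ξ * p.1 / Real.sqrt 2)
            ⁻¹' Oi d i) (fun _ => 1) := by
      funext p
      exact (Set.indicator_comp_right (g := fun _ : Fin d → ℝ => (1:ℝ))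
        (fun p : ℝ × (Fin d → ℝ) => fun j => p.2 j - ξ * p.1 / Real.sqrt 2)).symm
    rw [he]
    exact measurable_const.indicator (hshift (isOpen_Oi d i).measurableSet)
  have hF : StronglyMeasurable fun p : ℝ × (Fin d → ℝ) =>
      PiAbs d (fun j => p.2 j - ξ * p.1 / Real.sqrt 2) *
        Set.indicator (Oi d i) (fun _ => 1) (fun j => p.2 j - ξ * p.1 / Real.sqrt 2) *
        fGOI d c p.2 :=
    ((h1.mul h2).mul ((meas_fGOI d c).comp measurable_snd)).stronglyMeasurable
  have hI : StronglyMeasurable fun x : ℝ =>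
      ∫ lam : Fin d → ℝ,
        PiAbs d (fun j => lam j - ξ * x / Real.sqrt 2) *
          Set.indicator (Oi d i) (fun _ => 1) (fun j => lam j - ξ * x / Real.sqrt 2) *
          fGOI d c lam := hF.integral_prod_right'
  exact ((cont_stdPhi.stronglyMeasurable.mul hI).aestronglyMeasurable).restrict

/-! ### Continuity of `fGOI` in `c` -/

lemma fGOI_contAt (d : ℕ) {cst : ℝ} (h : (0:ℝ) < 1 + d * cst) (lam : Fin d → ℝ) :
    ContinuousAt (fun c => fGOI d c lam) cst := by
  unfold fGOI
  have hsqrt : ContinuousAt (fun c : ℝ => Kd d * Real.sqrt (1 + d * c)) cst := by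
    apply continuousAt_const.mul
    exact Real.continuous_sqrt.continuousAt.comp (by fun_prop)
  have h1 : ContinuousAt (fun c : ℝ => (Kd d * Real.sqrt (1 + d * c))⁻¹) cst :=
    hsqrt.inv₀ (mul_pos (Kd_pos d) (Real.sqrt_pos.mpr h)).ne'
  have h2 : ContinuousAt (fun c : ℝ =>
      Real.exp (-(∑ j, lam j ^ 2) / 2 + c * (∑ j, lam j) ^ 2 / (2 * (1 + d * c)))) cst := by
    apply Real.continuous_exp.continuousAt.comp
    apply continuousAt_const.add
    exact (continuousAt_id.mul continuousAt_const).div (by fun_prop)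
      (ne_of_gt (by linarith))
  exact ((h1.mul continuousAt_const).mul h2).mul continuousAt_const

/-! ### Inner convergence -/

lemma inner_tendsto (d i : ℕ) {cs sL : ℕ → ℝ} {cst : ℝ}
    (hc : Tendsto cs atTop (nhds cst)) (hs : Tendsto sL atTop (nhds 0)) (hcst : 0 < cst) :
    Tendsto (fun L => ∫ lam : Fin d → ℝ,
        PiAbs d (fun j => lam j - sL L) *
          Set.indicator (Oi d i) (fun _ => 1) (fun j => lam j - sL L) *
          fGOI d (cs L) lam) atTop (nhds (GOIint d i cst)) := by
  have hcm0 : (0:ℝ) ≤ cst + 1 := by linarith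
  have hdcm : (0:ℝ) < 1 + d * (cst + 1) := by
    have := mul_nonneg (Nat.cast_nonneg d : (0:ℝ) ≤ d) hcm0; linarith
  have hα : (0:ℝ) < 1 / (2 * (1 + d * (cst + 1))) := by positivity
  unfold GOIint
  refine tendsto_integral_filter_of_dominated_convergence
    (fun lam => (Kd d)⁻¹ * (1 + 1 : ℝ) ^ d *
      ∏ j, ((1 + lam j ^ 2) ^ (2 * d + 1)
        * Real.exp (-(1 / (2 * (1 + d * (cst + 1)))) * lam j ^ 2)))
    ?_ ?_ ?_ ?_
  · exact Eventually.of_forall fun L => sm_inner d i (cs L) (sL L)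
  · have h1 : ∀ᶠ L in atTop, |sL L| ≤ 1 :=
      ((by simpa using hs.abs : Tendsto (fun L => |sL L|) atTop (nhds 0)).eventually_lt_const
        one_pos).mono fun L h => h.le
    have h2 : ∀ᶠ L in atTop, 0 ≤ cs L :=
      (hc.eventually_const_lt hcst).mono fun L h => h.le
    have h3 : ∀ᶠ L in atTop, cs L ≤ cst + 1 :=
      (hc.eventually_lt_const (by linarith : cst < cst + 1)).mono fun L h => h.le
    filter_upwards [h1, h2, h3] with L hL1 hL2 hL3
    refine Eventually.of_forall fun lam => ?_
    have hb := integrand_bound d i hL2 hL3 hL1 lam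
    rw [abs_mul, abs_mul] at hb
    simpa [Real.norm_eq_abs, abs_mul] using hb
  · exact (intdom d hα (2 * d + 1)).const_mul _
  · have hae : ∀ᵐ lam : Fin d → ℝ, ∀ j, lam j ≠ 0 := by
      refine ae_all_iff.mpr fun j => ?_
      have := MeasureTheory.Measure.ae_eval_ne (fun _ : Fin d => (volume : Measure ℝ)) j (0:ℝ)
      simpa [MeasureTheory.volume_pi] using this
    filter_upwards [hae] with lam hlam
    have hT1 : Tendsto (fun L => PiAbs d (fun j => lam j - sL L)) atTop (nhds (PiAbs d lam)) := by
      have harg : Tendsto (fun L => (fun j => lam j - sL L)) atTop (nhds lam) := by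
        rw [tendsto_pi_nhds]
        intro j
        simpa using tendsto_const_nhds.sub hs
      exact ((contPiAbs d).tendsto lam).comp harg
    have hT2 : Tendsto (fun L => Set.indicator (Oi d i) (fun _ => (1:ℝ)) (fun j => lam j - sL L))
        atTop (nhds (Set.indicator (Oi d i) (fun _ => (1:ℝ)) lam)) := by
      have hev : ∀ᶠ L in atTop, ∀ j, |sL L| < |lam j| := by
        rw [eventually_all]
        intro j
        exact (by simpa using hs.abs : Tendsto (fun L => |sL L|) atTop
          (nhds 0)).eventually_lt_const (abs_pos.mpr (hlam j))
      refine Tendsto.congr' ?_ tendsto_const_nhds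
      filter_upwards [hev] with L hL
      exact (indicator_shift_eq d i hL).symm
    have hT3 : Tendsto (fun L => fGOI d (cs L) lam) atTop (nhds (fGOI d cst lam)) := by
      have hpos : (0:ℝ) < 1 + d * cst := by
        have := mul_nonneg (Nat.cast_nonneg d : (0:ℝ) ≤ d) hcst.le; linarith
      exact ((fGOI_contAt d hpos lam).tendsto).comp hc
    exact (hT1.mul hT2).mul hT3

/-! ### Gaussian facts -/

lemma stdPhi_eq (x : ℝ) :
    stdPhi x = Real.exp (-(1/2 : ℝ) * x ^ 2) * (Real.sqrt (2 * π))⁻¹ := by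
  unfold stdPhi
  rw [div_eq_mul_inv]
  congr 2
  ring

lemma stdPhi_nonneg (x : ℝ) : 0 ≤ stdPhi x := by
  unfold stdPhi; positivity

lemma integrable_stdPhi : Integrable stdPhi := by
  have : Integrable fun x : ℝ => Real.exp (-(1/2 : ℝ) * x ^ 2) * (Real.sqrt (2 * π))⁻¹ :=
    (integrable_exp_neg_mul_sq (by norm_num)).mul_const _
  exact this.congr (Filter.Eventually.of_forall fun x => (stdPhi_eq x).symm)

lemma integral_stdPhi : ∫ x, stdPhi x = 1 := by
  have h1 : ∫ x, stdPhi x = (∫ x, Real.exp (-(1/2 : ℝ) * x ^ 2)) * (Real.sqrt (2 * π))⁻¹ := by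
    rw [← MeasureTheory.integral_mul_const]
    exact integral_congr_ae (Filter.Eventually.of_forall fun x => stdPhi_eq x)
  rw [h1, integral_gaussian, show π / (1/2 : ℝ) = 2 * π by ring]
  exact mul_inv_cancel₀ (by positivity)

lemma integral_stdPhi_Ioi (u : ℝ) : ∫ x in Set.Ioi u, stdPhi x = 1 - stdCDF u := by
  have h := intervalIntegral.integral_Iic_add_Ioi (b := u) (f := stdPhi) (μ := volume)
    integrable_stdPhi.integrableOn integrable_stdPhi.integrableOn
  rw [integral_stdPhi] at h
  unfold stdCDF
  linarith

/-! ### Outer convergence -/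

lemma key_tendsto (d i : ℕ) (u : ℝ) {cs ξs : ℕ → ℝ} {cst : ℝ}
    (hc : Tendsto cs atTop (nhds cst)) (hξ : Tendsto ξs atTop (nhds 0)) (hcst : 0 < cst) :
    Tendsto (fun L => GOIintShift d i (cs L) (ξs L) u) atTop
      (nhds (GOIint d i cst * (1 - stdCDF u))) := by
  have hcm0 : (0:ℝ) ≤ cst + 1 := by linarith
  have hdcm : (0:ℝ) < 1 + d * (cst + 1) := by
    have := mul_nonneg (Nat.cast_nonneg d : (0:ℝ) ≤ d) hcm0; linarith
  have hα : (0:ℝ) < 1 / (2 * (1 + d * (cst + 1))) := by positivity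
  set gdom : (Fin d → ℝ) → ℝ := fun lam =>
    ∏ j, ((1 + lam j ^ 2) ^ (2 * d + 1)
      * Real.exp (-(1 / (2 * (1 + d * (cst + 1)))) * lam j ^ 2)) with hgdom
  have hgdom_int : Integrable gdom := intdom d hα (2 * d + 1)
  have hgdom_nn : ∀ lam, 0 ≤ gdom lam := fun lam =>
    Finset.prod_nonneg fun j _ => by positivity
  set Cint : ℝ := ∫ lam, gdom lam with hCint
  have hCint_nn : 0 ≤ Cint := integral_nonneg hgdom_nn
  set c0 : ℝ := (Kd d)⁻¹ * Cint * 2 ^ d * (Real.sqrt (2 * π))⁻¹ with hc0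
  have hc0nn : 0 ≤ c0 :=
    mul_nonneg (mul_nonneg (mul_nonneg (inv_nonneg.mpr (Kd_pos d).le) hCint_nn)
      (by positivity)) (by positivity)
  unfold GOIintShift
  have hlim : ∫ x in Set.Ioi u, stdPhi x * GOIint d i cst
      = GOIint d i cst * (1 - stdCDF u) := by
    rw [MeasureTheory.integral_mul_const, integral_stdPhi_Ioi, mul_comm]
  rw [← hlim]
  refine tendsto_integral_filter_of_dominated_convergence
    (fun x => c0 * ((1 + x ^ 2) ^ d * Real.exp (-(1/2 : ℝ) * x ^ 2))) ?_ ?_ ?_ ?_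
  · exact Eventually.of_forall fun L => sm_outer d i (cs L) (ξs L) u
  · have h1 : ∀ᶠ L in atTop, |ξs L| ≤ 1 :=
      ((by simpa using hξ.abs : Tendsto (fun L => |ξs L|) atTop (nhds 0)).eventually_lt_const
        one_pos).mono fun L h => h.le
    have h2 : ∀ᶠ L in atTop, 0 ≤ cs L :=
      (hc.eventually_const_lt hcst).mono fun L h => h.le
    have h3 : ∀ᶠ L in atTop, cs L ≤ cst + 1 :=
      (hc.eventually_lt_const (by linarith : cst < cst + 1)).mono fun L h => h.le
    filter_upwards [h1, h2, h3] with L hL1 hL2 hL3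
    refine Eventually.of_forall fun x => ?_
    have hsb : |ξs L * x / Real.sqrt 2| ≤ |x| := by
      rw [abs_div, abs_of_nonneg (Real.sqrt_nonneg 2), abs_mul]
      have h4 : |ξs L| * |x| ≤ |x| := mul_le_of_le_one_left (abs_nonneg x) hL1
      have h5 : (1:ℝ) ≤ Real.sqrt 2 := by
        have := Real.sqrt_le_sqrt (one_le_two (α := ℝ))
        simpa using this
      calc |ξs L| * |x| / Real.sqrt 2 ≤ |ξs L| * |x| :=
            div_le_self (by positivity) h5
        _ ≤ |x| := h4
    have hInner : |∫ lam : Fin d → ℝ,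
        PiAbs d (fun j => lam j - ξs L * x / Real.sqrt 2) *
          Set.indicator (Oi d i) (fun _ => 1) (fun j => lam j - ξs L * x / Real.sqrt 2) *
          fGOI d (cs L) lam|
        ≤ (Kd d)⁻¹ * (1 + |x|) ^ d * Cint := by
      have hb : ∀ lam : Fin d → ℝ, ‖PiAbs d (fun j => lam j - ξs L * x / Real.sqrt 2) *
          Set.indicator (Oi d i) (fun _ => 1) (fun j => lam j - ξs L * x / Real.sqrt 2) *
          fGOI d (cs L) lam‖ ≤ (Kd d)⁻¹ * (1 + |x|) ^ d * gdom lam := fun lam => by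
        have hib := integrand_bound d i hL2 hL3 hsb lam
        rw [abs_mul, abs_mul] at hib
        simpa [Real.norm_eq_abs, abs_mul, hgdom] using hib
      have := norm_integral_le_of_norm_le
        ((hgdom_int.const_mul ((Kd d)⁻¹ * (1 + |x|) ^ d)).congr
          (Filter.Eventually.of_forall fun lam => rfl))
        (Filter.Eventually.of_forall hb)
      rw [MeasureTheory.integral_const_mul] at this
      simpa [Real.norm_eq_abs, hCint] using this
    calc ‖stdPhi x * ∫ lam : Fin d → ℝ,
          PiAbs d (fun j => lam j - ξs L * x / Real.sqrt 2) *
            Set.indicator (Oi d i) (fun _ => 1) (fun j => lam j - ξs L * x / Real.sqrt 2) *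
            fGOI d (cs L) lam‖
        = stdPhi x * |∫ lam : Fin d → ℝ,
            PiAbs d (fun j => lam j - ξs L * x / Real.sqrt 2) *
              Set.indicator (Oi d i) (fun _ => 1) (fun j => lam j - ξs L * x / Real.sqrt 2) *
              fGOI d (cs L) lam| := by
          rw [Real.norm_eq_abs, abs_mul, abs_of_nonneg (stdPhi_nonneg x)]
      _ ≤ stdPhi x * ((Kd d)⁻¹ * (1 + |x|) ^ d * Cint) :=
          mul_le_mul_of_nonneg_left hInner (stdPhi_nonneg x)
      _ ≤ stdPhi x * ((Kd d)⁻¹ * (2 * (1 + x ^ 2)) ^ d * Cint) := by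
          apply mul_le_mul_of_nonneg_left _ (stdPhi_nonneg x)
          apply mul_le_mul_of_nonneg_right _ hCint_nn
          apply mul_le_mul_of_nonneg_left _ (inv_nonneg.mpr (Kd_pos d).le)
          apply pow_le_pow_left₀ (by positivity)
          nlinarith [abs_le_one_add_sq x, sq_nonneg x]
      _ = c0 * ((1 + x ^ 2) ^ d * Real.exp (-(1/2 : ℝ) * x ^ 2)) := by
          rw [stdPhi_eq x, hc0, mul_pow]
          ring
  · exact ((int1d (by norm_num : (0:ℝ) < 1/2) d).const_mul c0).integrableOn
  · refine Filter.Eventually.of_forall fun x => ?_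
    have hsx : Tendsto (fun L => ξs L * x / Real.sqrt 2) atTop (nhds 0) := by
      have := (hξ.mul_const x).div_const (Real.sqrt 2)
      simpa using this
    exact tendsto_const_nhds.mul (inner_tendsto d i hc hsx hcst)

/-- Low-disorder regime of Theorem 3.3: if `κ'(1) < 1` then `N_i(L,u)` converges to
`(2√π/Γ((d+1)/2))·(η_1(1−κ'(1)))^{−d/2}·(∫ Π·𝟙_{O_i}·f_{(1+η_1(1−κ'(1)))/2})·(1−Φ(u))`. -/
theorem statement3 (d i : ℕ) (hd : 2 ≤ d) (hi : i ≤ d) (u : ℝ) (κ : ℝ → ℝ)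
    (hsmooth : ContDiff ℝ 2 κ) (hfix : κ 1 = 1)
    (hpos1 : 0 < deriv κ 1) (hpos2 : 0 < deriv (deriv κ) 1)
    (hjensen : deriv κ 1 * (deriv κ 1 - 1) ≤ deriv (deriv κ) 1)
    (hlow : deriv κ 1 < 1) :
    Tendsto (fun L : ℕ => Ncrit d i κ u L) atTop
      (nhds (2 * Real.sqrt π / Real.Gamma (((d : ℝ) + 1) / 2) *
        (deriv κ 1 / deriv (deriv κ) 1 * (1 - deriv κ 1)) ^ (-(d : ℝ) / 2) *
        GOIint d i ((1 + deriv κ 1 / deriv (deriv κ) 1 * (1 - deriv κ 1)) / 2) *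
        (1 - stdCDF u))) := by
  have hη := etaL_tendsto hsmooth hfix hpos1 hlow hpos2
  have hξ := xiL_tendsto hsmooth hfix hpos1 hlow hpos2
  set ηs : ℝ := deriv κ 1 / deriv (deriv κ) 1 * (1 - deriv κ 1) with hηs
  have hηpos : 0 < ηs := by
    apply mul_pos (div_pos hpos1 hpos2)
    linarith
  have hcs : Tendsto (fun L => (1 + etaL κ L - xiL κ L) / 2) atTop (nhds ((1 + ηs) / 2)) := by
    have h1 := (((tendsto_const_nhds (x := (1:ℝ)) (f := (atTop : Filter ℕ))).add hη).sub hξ).div_const (2:ℝ)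
    simpa using h1
  have hshift := key_tendsto d i u hcs hξ (by linarith : (0:ℝ) < (1 + ηs) / 2)
  have hrpow : Tendsto (fun L => etaL κ L ^ (-(d:ℝ) / 2)) atTop (nhds (ηs ^ (-(d:ℝ) / 2))) :=
    hη.rpow_const (Or.inl hηpos.ne')
  have hfin := ((tendsto_const_nhds
    (x := 2 * Real.sqrt π / Real.Gamma (((d : ℝ) + 1) / 2))
    (f := (atTop : Filter ℕ))).mul hrpow).mul hshift
  have hval : 2 * Real.sqrt π / Real.Gamma (((d : ℝ) + 1) / 2) * ηs ^ (-(d:ℝ) / 2) *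
      (GOIint d i ((1 + ηs) / 2) * (1 - stdCDF u))
      = 2 * Real.sqrt π / Real.Gamma (((d : ℝ) + 1) / 2) * ηs ^ (-(d:ℝ) / 2) *
        GOIint d i ((1 + ηs) / 2) * (1 - stdCDF u) := by ring
  rw [hval] at hfin
  exact hfin.congr fun L => by rw [Ncrit]
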